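/- Let n ≥ 1. The ℂ-algebra homomorphism φ : ℂ[u, v, w] → ℂ[x, y] determined by φ(u) = xⁿ, φ(v) = yⁿ, φ(w) = x·y has kernel equal to the principal ideal generated by u·v − wⁿ. Consequently φ induces an isomorphism of ℂ-algebras ℂ[u,v,w]/(uv − wⁿ) ≅ im(φ), the subalgebra of ℂ[x,y] generated by xⁿ, yⁿ, and xy. -/

import Mathlib

open MvPolynomial

/-- The map `ℂ[u,v,w] → ℂ[x,y]`, `u ↦ xⁿ`, `v ↦ yⁿ`, `w ↦ xy`. -/
noncomputable def kleinianMap (n : ℕ) : MvPolynomial (Fin 3) ℂ →ₐ[ℂ] MvPolynomial (Fin 2) ℂ :=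
  aeval ![(X 0 : MvPolynomial (Fin 2) ℂ) ^ n, (X 1 : MvPolynomial (Fin 2) ℂ) ^ n,
    (X 0 : MvPolynomial (Fin 2) ℂ) * X 1]


lemma expand_monomial' (n : ℕ) (d : Fin 2 →₀ ℕ) (a : ℂ) :
    expand n (monomial d a : MvPolynomial (Fin 2) ℂ) = monomial (n • d) a := by
  rw [monomial_eq, monomial_eq, map_mul]
  simp only [expand_C]
  congr 1
  rw [Finsupp.prod, map_prod]
  rw [Finsupp.prod_of_support_subset (n • d) Finsupp.support_smul (fun i e => X i ^ e)
    (fun i _ => pow_zero _)]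
  apply Finset.prod_congr rfl
  intro i hi
  simp [Finsupp.smul_apply, pow_mul, mul_comm]

lemma smul_finsupp_inj (n : ℕ) (hn : 0 < n) : Function.Injective (fun d : Fin 2 →₀ ℕ => n • d) := by
  intro a b h
  ext i
  have := DFunLike.congr_fun h i
  simp only [Finsupp.smul_apply, smul_eq_mul] at this
  exact Nat.eq_of_mul_eq_mul_left hn this

lemma coeff_expand_smul (n : ℕ) (hn : 0 < n) (d : Fin 2 →₀ ℕ) (p : MvPolynomial (Fin 2) ℂ) :
    coeff (n • d) (expand n p) = coeff d p := by
  conv_lhs => rw [p.as_sum]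
  rw [map_sum, coeff_sum]
  simp only [expand_monomial', coeff_monomial]
  simp only [fun v : Fin 2 →₀ ℕ => propext (show (n • v = n • d) ↔ (v = d) from
    ⟨fun h => smul_finsupp_inj n hn h, fun h => by rw [h]⟩)]
  rw [Finset.sum_ite_eq' p.support d (fun v => coeff v p)]
  split
  · rfl
  · next h => exact (MvPolynomial.notMem_support_iff.mp h).symm

lemma coeff_expand_of_not_dvd (n : ℕ) (e : Fin 2 →₀ ℕ) (he : ¬ ∀ i, n ∣ e i)
    (p : MvPolynomial (Fin 2) ℂ) : coeff e (expand n p) = 0 := by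
  conv_lhs => rw [p.as_sum]
  rw [map_sum, coeff_sum]
  simp only [expand_monomial', coeff_monomial]
  apply Finset.sum_eq_zero
  intro v _
  rw [if_neg]
  intro h
  exact he (fun i => ⟨v i, by rw [← h]; simp⟩)


noncomputable abbrev Emap (n : ℕ) : MvPolynomial (Fin 2) ℂ →ₐ[ℂ] MvPolynomial (Fin 2) ℂ :=
  (expand n).comp (rename ⇑(Equiv.swap (0 : Fin 2) 1))

lemma expand_inj (n : ℕ) (hn : 0 < n) (p : MvPolynomial (Fin 2) ℂ)
    (h : expand n p = 0) : p = 0 := by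
  ext d
  rw [← coeff_expand_smul n hn d p, h, coeff_zero, coeff_zero]

lemma Emap_inj (n : ℕ) (hn : 0 < n) (p : MvPolynomial (Fin 2) ℂ)
    (h : Emap n p = 0) : p = 0 := by
  have h2 : rename ⇑(Equiv.swap (0 : Fin 2) 1) p = 0 := expand_inj n hn _ h
  have := rename_injective (R := ℂ) ⇑(Equiv.swap (0 : Fin 2) 1) (Equiv.injective _)
  exact this (by simpa using h2)

-- arithmetic fact
lemma arith (n a c e : ℕ) (hc : c < n) (he : e < n) (hne : e ≠ c) (hle : e ≤ n * a + c) :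
    ¬ n ∣ (n * a + c - e) := by
  rintro ⟨k, hk⟩
  have heq : n * a + c = n * k + e := by omega
  have := congrArg (· % n) heq
  simp only [Nat.mul_add_mod, Nat.mod_eq_of_lt hc, Nat.mod_eq_of_lt he] at this
  exact hne this.symm

noncomputable def t11 : Fin 2 →₀ ℕ := Finsupp.single 0 1 + Finsupp.single 1 1

lemma X0X1_pow (e : ℕ) : ((X 0 * X 1 : MvPolynomial (Fin 2) ℂ)) ^ e = monomial (e • t11) 1 := by
  rw [show (X 0 * X 1 : MvPolynomial (Fin 2) ℂ) = monomial t11 1 by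
    rw [t11, X, X, monomial_mul, mul_one]]
  rw [monomial_pow, one_pow]

lemma t11_apply (i : Fin 2) : t11 i = 1 := by
  fin_cases i <;> simp [t11, Finsupp.single_apply]

lemma term_coeff (n : ℕ) (hn : 0 < n) (c e : ℕ) (hc : c < n) (he : e < n)
    (d : Fin 2 →₀ ℕ) (p : MvPolynomial (Fin 2) ℂ) :
    coeff (n • d + c • t11) (Emap n p * monomial (e • t11) 1) =
      if e = c then coeff (n • d) (Emap n p) else 0 := by
  rw [coeff_mul_monomial']
  split
  · next hle =>
    by_cases hec : e = c
    · subst hec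
      rw [if_pos rfl, add_tsub_cancel_right, mul_one]
    · rw [if_neg hec]
      have hle0 : e ≤ n * d 0 + c := by
        have := hle 0
        simpa [Finsupp.smul_apply, t11_apply, smul_eq_mul] using this
      have hkey : ¬ ∀ i, n ∣ ((n • d + c • t11) - e • t11) i := by
        intro hall
        have h0 := hall 0
        simp only [Finsupp.tsub_apply, Finsupp.add_apply, Finsupp.smul_apply, t11_apply,
          smul_eq_mul, mul_one] at h0
        exact arith n (d 0) c e hc he hec hle0 h0
      simp only [AlgHom.coe_comp, Function.comp_apply, mul_one] at *
      exact coeff_expand_of_not_dvd n _ hkey _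
  · next hle =>
    rw [if_neg]
    intro hec
    subst hec
    exact hle le_add_self

lemma key_inj (n : ℕ) (hn : 0 < n) (q : Polynomial (MvPolynomial (Fin 2) ℂ))
    (hdeg : q.degree < n)
    (h0 : Polynomial.eval₂ ((Emap n) : MvPolynomial (Fin 2) ℂ →+* MvPolynomial (Fin 2) ℂ)
      (X 0 * X 1) q = 0) : q = 0 := by
  have hsupp : ∀ e ∈ q.support, e < n := by
    intro e he
    have h1 : (e : WithBot ℕ) ≤ q.degree := Polynomial.le_degree_of_ne_zero
      (Polynomial.mem_support_iff.mp he)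
    have := lt_of_le_of_lt h1 hdeg
    exact_mod_cast this
  refine Polynomial.ext fun c => ?_
  rw [Polynomial.coeff_zero]
  by_cases hc : c < n
  · apply Emap_inj n hn
    ext d
    rw [coeff_zero]
    by_cases hd : ∀ i, n ∣ d i
    · set d' : Fin 2 →₀ ℕ := d.mapRange (· / n) (by simp) with hd'
      have hnd : n • d' = d := by
        ext i
        simp only [Finsupp.smul_apply, hd', Finsupp.mapRange_apply, smul_eq_mul]
        exact Nat.mul_div_cancel' (hd i)
      rw [← hnd]
      have hc0 : coeff (n • d' + c • t11) (Polynomial.eval₂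
          ((Emap n) : MvPolynomial (Fin 2) ℂ →+* MvPolynomial (Fin 2) ℂ) (X 0 * X 1) q) = 0 := by
        rw [h0, coeff_zero]
      rw [← hc0, Polynomial.eval₂_eq_sum, Polynomial.sum, coeff_sum]
      have hterm : ∀ e ∈ q.support,
          coeff (n • d' + c • t11) ((Emap n) (q.coeff e) * (X 0 * X 1) ^ e) =
            if e = c then coeff (n • d') ((Emap n) (q.coeff e)) else 0 := by
        intro e he
        rw [X0X1_pow]
        exact term_coeff n hn c e hc (hsupp e he) d' (q.coeff e)
      rw [Finset.sum_congr rfl (fun e he => by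
        rw [show ((((Emap n) : MvPolynomial (Fin 2) ℂ →+* MvPolynomial (Fin 2) ℂ)) (q.coeff e)
          : MvPolynomial (Fin 2) ℂ) = (Emap n) (q.coeff e) from rfl, hterm e he])]
      rw [Finset.sum_ite_eq' q.support c]
      split
      · rfl
      · next h => simp [Polynomial.notMem_support_iff.mp h]
    · exact coeff_expand_of_not_dvd n d hd _
  · exact Polynomial.coeff_eq_zero_of_degree_lt (lt_of_lt_of_le hdeg (by exact_mod_cast not_lt.mp hc))


noncomputable def e3 : MvPolynomial (Fin 3) ℂ ≃ₐ[ℂ] Polynomial (MvPolynomial (Fin 2) ℂ) :=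
  (renameEquiv ℂ (Equiv.swap (0 : Fin 3) 2)).trans (finSuccEquiv ℂ 2)

lemma e3_X0 : e3 (X 0) = Polynomial.C (X 1) := by
  rw [e3]
  simp only [AlgEquiv.trans_apply, renameEquiv_apply, rename_X]
  rw [Equiv.swap_apply_left]
  rw [show (2 : Fin 3) = Fin.succ 1 from rfl, finSuccEquiv_X_succ]

lemma e3_X1 : e3 (X 1) = Polynomial.C (X 0) := by
  rw [e3]
  simp only [AlgEquiv.trans_apply, renameEquiv_apply, rename_X]
  rw [show (Equiv.swap (0 : Fin 3) 2) 1 = 1 by decide]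
  rw [show (1 : Fin 3) = Fin.succ 0 from rfl, finSuccEquiv_X_succ]

lemma e3_X2 : e3 (X 2) = Polynomial.X := by
  rw [e3]
  simp only [AlgEquiv.trans_apply, renameEquiv_apply, rename_X]
  rw [Equiv.swap_apply_right, finSuccEquiv_X_zero]

lemma Emap_X0 (n : ℕ) : Emap n (X 0) = X 1 ^ n := by
  simp [Emap, Equiv.swap_apply_left]

lemma Emap_X1 (n : ℕ) : Emap n (X 1) = X 0 ^ n := by
  simp [Emap, Equiv.swap_apply_right]

lemma e3_C (r : ℂ) : e3 (C r) = Polynomial.C (C r) := by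
  rw [show (C r : MvPolynomial (Fin 3) ℂ) = algebraMap ℂ _ r from rfl, AlgEquiv.commutes]
  rfl

lemma hcomm (n : ℕ) (p : MvPolynomial (Fin 3) ℂ) :
    kleinianMap n p =
      Polynomial.eval₂ ((Emap n) : MvPolynomial (Fin 2) ℂ →+* MvPolynomial (Fin 2) ℂ)
        (X 0 * X 1) (e3 p) := by
  have : (kleinianMap n : MvPolynomial (Fin 3) ℂ →+* MvPolynomial (Fin 2) ℂ) =
      (Polynomial.eval₂RingHom ((Emap n) : MvPolynomial (Fin 2) ℂ →+* MvPolynomial (Fin 2) ℂ)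
        (X 0 * X 1)).comp (e3 : MvPolynomial (Fin 3) ℂ →+* Polynomial (MvPolynomial (Fin 2) ℂ)) := by
    apply MvPolynomial.ringHom_ext
    · intro r
      show kleinianMap n (C r) = Polynomial.eval₂ _ _ (e3 (C r))
      rw [e3_C]
      simp [kleinianMap]
    · intro i
      fin_cases i
      · show kleinianMap n (X 0) = Polynomial.eval₂ _ _ (e3 (X 0))
        rw [e3_X0]
        simp [kleinianMap, Emap_X1]
      · show kleinianMap n (X 1) = Polynomial.eval₂ _ _ (e3 (X 1))
        rw [e3_X1]
        simp [kleinianMap, Emap_X0]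
      · show kleinianMap n (X 2) = Polynomial.eval₂ _ _ (e3 (X 2))
        rw [e3_X2]
        simp [kleinianMap]
  exact DFunLike.congr_fun this p

/-- kernel = ideal, and iso -/

theorem stmt_2 (n : ℕ) (hn : 1 ≤ n) :
    RingHom.ker (kleinianMap n) =
      Ideal.span {(X 0 : MvPolynomial (Fin 3) ℂ) * X 1 - X 2 ^ n} ∧
    Nonempty ((MvPolynomial (Fin 3) ℂ ⧸
        Ideal.span {(X 0 : MvPolynomial (Fin 3) ℂ) * X 1 - X 2 ^ n}) ≃ₐ[ℂ]
      (kleinianMap n).range) := by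
  have hn0 : 0 < n := hn
  set g3 : MvPolynomial (Fin 3) ℂ := X 0 * X 1 - X 2 ^ n with hg3
  have hker : RingHom.ker (kleinianMap n) = Ideal.span {g3} := by
    apply le_antisymm
    · intro p hp
      rw [RingHom.mem_ker] at hp
      set h : Polynomial (MvPolynomial (Fin 2) ℂ) :=
        Polynomial.X ^ n - Polynomial.C (X 0 * X 1) with hh
      have hmonic : h.Monic := Polynomial.monic_X_pow_sub_C _ hn0.ne'
      have hdegh : h.degree = n := Polynomial.degree_X_pow_sub_C hn0 _
      have hEm : (Emap n) (X 0 * X 1) = X 1 ^ n * X 0 ^ n := by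
        rw [map_mul, Emap_X0, Emap_X1]
      have hpsih : Polynomial.eval₂
          ((Emap n) : MvPolynomial (Fin 2) ℂ →+* MvPolynomial (Fin 2) ℂ) (X 0 * X 1) h = 0 := by
        rw [hh, Polynomial.eval₂_sub, Polynomial.eval₂_pow, Polynomial.eval₂_X,
          Polynomial.eval₂_C]
        rw [show (((Emap n) : MvPolynomial (Fin 2) ℂ →+* MvPolynomial (Fin 2) ℂ) (X 0 * X 1)
          : MvPolynomial (Fin 2) ℂ) = (Emap n) (X 0 * X 1) from rfl, hEm]
        ring
      set q := e3 p with hq'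
      have hq : Polynomial.eval₂
          ((Emap n) : MvPolynomial (Fin 2) ℂ →+* MvPolynomial (Fin 2) ℂ) (X 0 * X 1) q = 0 := by
        rw [← hcomm n p, hp]
      have hdiv := Polynomial.modByMonic_add_div q h
      have hr0 : q %ₘ h = 0 := by
        apply key_inj n hn0 _
          (lt_of_lt_of_le (Polynomial.degree_modByMonic_lt q hmonic) (le_of_eq hdegh))
        have h2 := congrArg (Polynomial.eval₂
          ((Emap n) : MvPolynomial (Fin 2) ℂ →+* MvPolynomial (Fin 2) ℂ) (X 0 * X 1)) hdiv
        rw [Polynomial.eval₂_add, Polynomial.eval₂_mul, hpsih, zero_mul, add_zero, hq] at h2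
        exact h2
      have hqfac : q = h * (q /ₘ h) := by
        conv_lhs => rw [← hdiv, hr0, zero_add]
      have he3h : e3 (X 2 ^ n - X 0 * X 1) = h := by
        rw [map_sub, map_pow, map_mul, e3_X0, e3_X1, e3_X2, hh, ← Polynomial.C_mul,
          mul_comm (X 1 : MvPolynomial (Fin 2) ℂ) (X 0)]
      have hpfac : p = (X 2 ^ n - X 0 * X 1) * e3.symm (q /ₘ h) := by
        apply e3.injective
        rw [map_mul, he3h, AlgEquiv.apply_symm_apply, ← hqfac]
      rw [Ideal.mem_span_singleton]
      exact ⟨-(e3.symm (q /ₘ h)), by rw [hpfac, hg3]; ring⟩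
    · rw [Ideal.span_le, Set.singleton_subset_iff, SetLike.mem_coe, RingHom.mem_ker]
      simp [hg3, kleinianMap, mul_pow]
  refine ⟨hker, ?_⟩
  have hker2 : RingHom.ker ((kleinianMap n).rangeRestrict) = Ideal.span {g3} := by
    rw [← hker]
    ext x
    rw [RingHom.mem_ker, RingHom.mem_ker]
    have hval : (((kleinianMap n).rangeRestrict x : (kleinianMap n).range) : MvPolynomial (Fin 2) ℂ)
        = kleinianMap n x := rfl
    constructor
    · intro hx
      rw [← hval, hx]
      rfl
    · intro hx
      apply Subtype.ext
      rw [hval, hx]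
      rfl
  exact ⟨(Ideal.quotientEquivAlgOfEq ℂ hker2.symm).trans
    (Ideal.quotientKerAlgEquivOfSurjective ((kleinianMap n).rangeRestrict_surjective))⟩
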